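/- Let n be a positive integer, let w ∈ ℝⁿ have all positive components, and let z be a real number. Then the n-dimensional volume of the sliced unit cube G_{w,z}ⁿ ∩ Iⁿ equals the alternating sum over all subsets K of [n] of (-1)^{|K|} times the n-dimensional volume of the simplex Δ_{w,z}^K; that is, vol_n(G_{w,z}ⁿ ∩ Iⁿ) = Σ_{K ⊆ [n]} (-1)^{|K|} vol_n(Δ_{w,z}^K). -/

import Mathlib

open MeasureTheory Finset

/-- The combinatorial inclusion–exclusion identity for indicator-like products. -/
lemma alt_sum_indicator_prod (n : ℕ) (x : Fin n → ℝ) :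
    ∑ K : Finset (Fin n), (-1 : ℝ) ^ K.card *
      (if ∀ i, (if i ∈ K then (1 : ℝ) else 0) ≤ x i then (1 : ℝ) else 0)
    = if ∀ i, 0 ≤ x i ∧ x i < 1 then (1 : ℝ) else 0 := by
  classical
  set f : Fin n → ℝ := fun i => if (1 : ℝ) ≤ x i then 1 else 0 with hf
  set g : Fin n → ℝ := fun i => if (0 : ℝ) ≤ x i then 1 else 0 with hg
  have hfac : ∀ i, (-f i + g i) = if 0 ≤ x i ∧ x i < 1 then (1 : ℝ) else 0 := by
    intro i
    by_cases h1 : (1 : ℝ) ≤ x i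
    · have h0 : (0 : ℝ) ≤ x i := le_trans zero_le_one h1
      simp [hf, hg, h0, h1, not_lt.2 h1]
    · by_cases h0 : (0 : ℝ) ≤ x i
      · simp [hf, hg, h0, h1, lt_of_not_ge h1]
      · simp [hf, hg, h0, h1]
  have hrhs : (∏ i, (-f i + g i)) = if ∀ i, 0 ≤ x i ∧ x i < 1 then (1 : ℝ) else 0 := by
    rw [Finset.prod_congr rfl (fun i _ => hfac i), Finset.prod_boole]
    simp
  rw [← hrhs, Finset.prod_add, Finset.powerset_univ]
  refine Finset.sum_congr rfl (fun K _ => ?_)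
  have h1 : (∏ i ∈ K, -f i) = (-1 : ℝ) ^ K.card * ∏ i ∈ K, f i := by
    rw [Finset.prod_congr rfl (fun i (_ : i ∈ K) => (neg_one_mul (f i)).symm),
      Finset.prod_mul_distrib, Finset.prod_const]
  rw [h1, mul_assoc]
  congr 1
  have h2 : (∏ i ∈ K, f i) * ∏ i ∈ Finset.univ \ K, g i
      = ∏ i, (if i ∈ K then f i else g i) := by
    rw [← Finset.compl_eq_univ_sdiff, ← Finset.prod_mul_prod_compl K]
    congr 1
    · exact Finset.prod_congr rfl (fun i hi => by simp [hi])
    · refine Finset.prod_congr rfl (fun i hi => ?_)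
      simp [Finset.mem_compl.1 hi]
  rw [h2]
  have h3 : ∀ i, (if i ∈ K then f i else g i)
      = if (if i ∈ K then (1 : ℝ) else 0) ≤ x i then (1 : ℝ) else 0 := by
    intro i
    by_cases hi : i ∈ K <;> simp [hf, hg, hi]
  rw [Finset.prod_congr rfl (fun i _ => h3 i), Finset.prod_boole]
  simp

/-- Signed simplicial decomposition of a sliced unit cube: for `w` with all positive
components and any real `z`, the volume of `G_{w,z}^n ∩ I^n` equals the alternating
sum over subsets `K` of `[n]` of the volumes of the simplices `Δ_{w,z}^K`. -/
theorem volume_halfspace_inter_unitCube_eq_alternating_sum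
    (n : ℕ) (hn : 0 < n) (w : Fin n → ℝ) (hw : ∀ i, 0 < w i) (z : ℝ) :
    (volume ({x : Fin n → ℝ | ∑ i, w i * x i ≤ z} ∩ Set.Icc 0 1)).toReal =
      ∑ K : Finset (Fin n), (-1 : ℝ) ^ K.card *
        (volume ({x : Fin n → ℝ | ∑ i, w i * x i ≤ z} ∩
          {x : Fin n → ℝ | ∀ i, (if i ∈ K then (1 : ℝ) else 0) ≤ x i})).toReal := by
  classical
  set A : Set (Fin n → ℝ) := {x | ∑ i, w i * x i ≤ z} with hA
  have hAm : MeasurableSet A := by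
    apply measurableSet_le _ measurable_const
    exact Finset.measurable_sum _ (fun i _ => by fun_prop)
  set S : Finset (Fin n) → Set (Fin n → ℝ) :=
    fun K => A ∩ {x | ∀ i, (if i ∈ K then (1 : ℝ) else 0) ≤ x i} with hS
  have hSeq : ∀ K : Finset (Fin n), {x : Fin n → ℝ | ∀ i, (if i ∈ K then (1 : ℝ) else 0) ≤ x i}
      = Set.pi Set.univ (fun i : Fin n => Set.Ici (if i ∈ K then (1 : ℝ) else 0)) := by
    intro K; ext x; simp [Set.mem_pi, Pi.le_def]
  have hSm : ∀ K, MeasurableSet (S K) := by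
    intro K
    refine hAm.inter ?_
    rw [hSeq K]
    exact MeasurableSet.univ_pi fun i => measurableSet_Ici
  -- each simplex is bounded, hence of finite volume
  have hfin : ∀ K, volume (S K) < ⊤ := by
    intro K
    have hsub : S K ⊆ Set.Icc (0 : Fin n → ℝ) (fun i => |z| / w i) := by
      rintro x ⟨hxA, hxK⟩
      have hx0 : ∀ i, 0 ≤ x i := by
        intro i
        have := hxK i
        by_cases hi : i ∈ K
        · simp only [hi, if_true] at this; linarith
        · simpa [hi] using this
      constructor
      · intro i; exact hx0 i
      · intro i
        have hterm : w i * x i ≤ ∑ j, w j * x j := by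
          apply Finset.single_le_sum (fun j _ => mul_nonneg (hw j).le (hx0 j)) (Finset.mem_univ i)
        have : w i * x i ≤ |z| := le_trans hterm (le_trans hxA (le_abs_self z))
        rw [le_div_iff₀ (hw i)]
        linarith [this]
    calc volume (S K) ≤ volume (Set.Icc (0 : Fin n → ℝ) (fun i => |z| / w i)) :=
          measure_mono hsub
      _ < ⊤ := by
          rw [Real.volume_Icc_pi]
          exact ENNReal.prod_lt_top (fun i _ => ENNReal.ofReal_lt_top)
  -- replace the closed cube by the half-open cube (a.e. equal)
  set C : Set (Fin n → ℝ) := Set.pi Set.univ (fun _ => Set.Ico (0 : ℝ) 1) with hC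
  have hCm : MeasurableSet C := MeasurableSet.univ_pi fun i => measurableSet_Ico
  have hae : C =ᵐ[volume] (Set.Icc (0 : Fin n → ℝ) 1) := by
    rw [volume_pi]
    exact MeasureTheory.Measure.univ_pi_Ico_ae_eq_Icc
  have h1 : volume (A ∩ Set.Icc 0 1) = volume (A ∩ C) := by
    refine (measure_congr ?_).symm
    exact (Filter.EventuallyEq.refl _ A).inter hae
  have hACfin : volume (A ∩ C) < ⊤ := by
    calc volume (A ∩ C) ≤ volume (S ∅) := by
          apply measure_mono
          rintro x ⟨hxA, hxC⟩
          refine ⟨hxA, fun i => ?_⟩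
          have := hxC i (Set.mem_univ i)
          simpa using this.1
      _ < ⊤ := hfin ∅
  -- integrals of indicators
  have hint : ∀ K, Integrable ((S K).indicator (fun _ => (1 : ℝ))) volume :=
    fun K => (integrable_indicator_iff (hSm K)).2 (integrableOn_const (hfin K).ne)
  have hI : ∀ K, ∫ x : Fin n → ℝ, (S K).indicator (fun _ => (1 : ℝ)) x = (volume (S K)).toReal := by
    intro K; rw [integral_indicator_const (1 : ℝ) (hSm K), smul_eq_mul, mul_one, measureReal_def]
  have hIC : ∫ x : Fin n → ℝ, (A ∩ C).indicator (fun _ => (1 : ℝ)) x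
      = (volume (A ∩ C)).toReal := by
    rw [integral_indicator_const (1 : ℝ) (hAm.inter hCm), smul_eq_mul, mul_one, measureReal_def]
  -- pointwise identity
  have hpt : ∀ x : Fin n → ℝ, (A ∩ C).indicator (fun _ => (1 : ℝ)) x
      = ∑ K : Finset (Fin n), (-1 : ℝ) ^ K.card * (S K).indicator (fun _ => (1 : ℝ)) x := by
    intro x
    have hSind : ∀ K, (S K).indicator (fun _ => (1 : ℝ)) x
        = (if x ∈ A then (1 : ℝ) else 0) *
          (if ∀ i, (if i ∈ K then (1 : ℝ) else 0) ≤ x i then (1 : ℝ) else 0) := by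
      intro K
      by_cases hxA : x ∈ A
      · by_cases hxK : ∀ i, (if i ∈ K then (1 : ℝ) else 0) ≤ x i
        · have : x ∈ S K := ⟨hxA, hxK⟩
          simp [Set.indicator_of_mem this, hxA, hxK]
        · have : x ∉ S K := fun h => hxK h.2
          simp [Set.indicator_of_notMem this, hxK]
      · have : x ∉ S K := fun h => hxA h.1
        simp [Set.indicator_of_notMem this, hxA]
    have hCind : (A ∩ C).indicator (fun _ => (1 : ℝ)) x
        = (if x ∈ A then (1 : ℝ) else 0) * (if ∀ i, 0 ≤ x i ∧ x i < 1 then (1 : ℝ) else 0) := by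
      by_cases hxA : x ∈ A
      · by_cases hxC : ∀ i, 0 ≤ x i ∧ x i < 1
        · have hxC' : x ∈ C := by
            intro i _
            exact ⟨(hxC i).1, (hxC i).2⟩
          simp [Set.indicator_of_mem (Set.mem_inter hxA hxC'), hxA, hxC]
        · have hxC' : x ∉ C := by
            intro h
            exact hxC (fun i => h i (Set.mem_univ i))
          have : x ∉ A ∩ C := fun h => hxC' h.2
          simp [Set.indicator_of_notMem this, hxC]
      · have : x ∉ A ∩ C := fun h => hxA h.1
        simp [Set.indicator_of_notMem this, hxA]
    rw [hCind]
    simp only [hSind]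
    rw [← alt_sum_indicator_prod n x, Finset.mul_sum]
    exact Finset.sum_congr rfl (fun K _ => by ring)
  -- put it together
  rw [h1, ← hIC]
  have : ∫ x : Fin n → ℝ, (A ∩ C).indicator (fun _ => (1 : ℝ)) x
      = ∑ K : Finset (Fin n), (-1 : ℝ) ^ K.card * (volume (S K)).toReal := by
    rw [show ((A ∩ C).indicator (fun _ => (1 : ℝ)))
        = fun x => ∑ K : Finset (Fin n), (-1 : ℝ) ^ K.card * (S K).indicator (fun _ => (1 : ℝ)) x
        from funext hpt]
    rw [integral_finset_sum _ (fun K _ => ((hint K).const_mul _))]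
    exact Finset.sum_congr rfl (fun K _ => by rw [integral_const_mul, hI K])
  exact this
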